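/- Let G be a finite simple graph on n vertices. Then γ^t_gr(B_L(G)) = 2 γ^L_gr(G) and Z_−(B_L(G)) = n + 2 Z_L(G). -/
import Mathlib


namespace ZFGrundy

variable {V : Type*}

/-- `u` is a member of the closed neighborhood `N[x]` of `x` in `G`. -/
def ClosedNbr (G : SimpleGraph V) (x u : V) : Prop := u = x ∨ G.Adj x u

/-- CCR-Z: the force `x → y` is valid w.r.t. blue set `S` if `y ∉ S`, `y ∈ N(x)`,
and `N[x] \ {y} ⊆ S`. -/
def ZForce (G : SimpleGraph V) (S : Set V) (x y : V) : Prop :=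
  y ∉ S ∧ G.Adj x y ∧ ∀ u, ClosedNbr G x u → u ≠ y → u ∈ S

/-- CCR-Z_ℓ̇: the force `x → y` is valid w.r.t. blue set `S` if `y ∉ S`, `y ∈ N[x]`,
and `N[x] \ {y} ⊆ S`. -/
def ZelldForce (G : SimpleGraph V) (S : Set V) (x y : V) : Prop :=
  y ∉ S ∧ ClosedNbr G x y ∧ ∀ u, ClosedNbr G x u → u ≠ y → u ∈ S

/-- CCR-Z_−: the force `x → y` is valid w.r.t. blue set `S` if `y ∉ S`, `y ∈ N(x)`,
and `N(x) \ {y} ⊆ S`. -/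
def ZminusForce (G : SimpleGraph V) (S : Set V) (x y : V) : Prop :=
  y ∉ S ∧ G.Adj x y ∧ ∀ u, G.Adj x u → u ≠ y → u ∈ S

/-- CCR-Z_L: either `x ≠ y` and the force is valid under CCR-Z_−, or `x = y` and the
force is valid under CCR-Z_ℓ̇. -/
def ZLForce (G : SimpleGraph V) (S : Set V) (x y : V) : Prop :=
  (x ≠ y ∧ ZminusForce G S x y) ∨ (x = y ∧ ZelldForce G S x y)

/-- `B` is a zero forcing set of `G` with respect to the color change rule `force`:
there is an ordering `b 0, …, b (k-1)` of the vertices outside `B` and vertices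
`a 0, …, a (k-1)` such that each force `a i → b i` is valid w.r.t. the blue set
consisting of all vertices other than `b i, b (i+1), …, b (k-1)`. -/
def IsZFS (G : SimpleGraph V) (force : SimpleGraph V → Set V → V → V → Prop)
    (B : Finset V) : Prop :=
  ∃ (k : ℕ) (b a : Fin k → V), Function.Injective b ∧
    (∀ v : V, v ∉ B ↔ ∃ i, b i = v) ∧
    ∀ i : Fin k, force G {v | ∀ j : Fin k, i ≤ j → v ≠ b j} (a i) (b i)

/-- The zero forcing number with respect to the color change rule `force`. -/
noncomputable def zfNum (G : SimpleGraph V)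
    (force : SimpleGraph V → Set V → V → V → Prop) : ℕ :=
  sInf {m : ℕ | ∃ B : Finset V, IsZFS G force B ∧ B.card = m}

/-- A Z-sequence: distinct vertices with `N(v i) \ ⋃_{j<i} N[v j] ≠ ∅`. -/
def IsZSeq (G : SimpleGraph V) {k : ℕ} (v : Fin k → V) : Prop :=
  Function.Injective v ∧
  ∀ i, ∃ u, G.Adj (v i) u ∧ ∀ j, j < i → ¬ ClosedNbr G (v j) u

/-- A dominating sequence: distinct vertices with `N[v i] \ ⋃_{j<i} N[v j] ≠ ∅`. -/
def IsDomSeq (G : SimpleGraph V) {k : ℕ} (v : Fin k → V) : Prop :=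
  Function.Injective v ∧
  ∀ i, ∃ u, ClosedNbr G (v i) u ∧ ∀ j, j < i → ¬ ClosedNbr G (v j) u

/-- A total dominating sequence: distinct vertices with `N(v i) \ ⋃_{j<i} N(v j) ≠ ∅`. -/
def IsTotDomSeq (G : SimpleGraph V) {k : ℕ} (v : Fin k → V) : Prop :=
  Function.Injective v ∧
  ∀ i, ∃ u, G.Adj (v i) u ∧ ∀ j, j < i → ¬ G.Adj (v j) u

/-- An L-sequence: distinct vertices with `N[v i] \ ⋃_{j<i} N(v j) ≠ ∅`. -/
def IsLSeq (G : SimpleGraph V) {k : ℕ} (v : Fin k → V) : Prop :=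
  Function.Injective v ∧
  ∀ i, ∃ u, ClosedNbr G (v i) u ∧ ∀ j, j < i → ¬ G.Adj (v j) u

/-- The Z-Grundy domination number: the largest length of a Z-sequence. -/
noncomputable def grundyZ (G : SimpleGraph V) : ℕ :=
  sSup {k : ℕ | ∃ v : Fin k → V, IsZSeq G v}

/-- The Grundy domination number: the largest length of a dominating sequence. -/
noncomputable def grundyDom (G : SimpleGraph V) : ℕ :=
  sSup {k : ℕ | ∃ v : Fin k → V, IsDomSeq G v}

/-- The Grundy total domination number: the largest length of a total dominating
sequence. -/
noncomputable def grundyTot (G : SimpleGraph V) : ℕ :=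
  sSup {k : ℕ | ∃ v : Fin k → V, IsTotDomSeq G v}

/-- The L-Grundy domination number: the largest length of an L-sequence. -/
noncomputable def grundyL (G : SimpleGraph V) : ℕ :=
  sSup {k : ℕ | ∃ v : Fin k → V, IsLSeq G v}

/-- The largest length of a total dominating sequence using only vertices of `X`. -/
noncomputable def grundyTotOn (G : SimpleGraph V) (X : Set V) : ℕ :=
  sSup {k : ℕ | ∃ v : Fin k → V, IsTotDomSeq G v ∧ ∀ i, v i ∈ X}

/-- The domination number: minimum size of a set `X` such that every vertex outside
`X` has a neighbor in `X`. -/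
noncomputable def domNum (G : SimpleGraph V) : ℕ :=
  sInf {m : ℕ | ∃ X : Finset V, (∀ v, v ∉ X → ∃ u ∈ X, G.Adj v u) ∧ X.card = m}

/-- The vertex cover number: minimum size of a set of vertices meeting every edge. -/
noncomputable def vcNum (G : SimpleGraph V) : ℕ :=
  sInf {m : ℕ | ∃ C : Finset V, (∀ u w, G.Adj u w → u ∈ C ∨ w ∈ C) ∧ C.card = m}

/-- The family `S(G)` of real symmetric matrices whose off-diagonal entry `A i j`
is nonzero exactly when `i` and `j` are adjacent in `G`. -/
def SFam (G : SimpleGraph V) : Set (Matrix V V ℝ) :=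
  {A | A.IsSymm ∧ ∀ i j : V, i ≠ j → (A i j ≠ 0 ↔ G.Adj i j)}

/-- The family `S_ℓ̇(G)`: matrices in `S(G)` with all diagonal entries nonzero. -/
def SldFam (G : SimpleGraph V) : Set (Matrix V V ℝ) :=
  {A | A ∈ SFam G ∧ ∀ i : V, A i i ≠ 0}

/-- The family `S_0(G)`: matrices in `S(G)` with all diagonal entries zero. -/
def S0Fam (G : SimpleGraph V) : Set (Matrix V V ℝ) :=
  {A | A ∈ SFam G ∧ ∀ i : V, A i i = 0}

/-- The bipartite graph `B_L(G)` on `{x_i} ∪ {y_i} ∪ {z_i}` (encoded as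
`Sum.inl i`, `Sum.inr (Sum.inl i)`, `Sum.inr (Sum.inr i)`), with edges `{x i, y j}`
and `{x i, z j}` for every edge `{i, j}` of `G`, together with edges `{x i, y i}`
for every vertex `i`. -/
def BL (G : SimpleGraph V) : SimpleGraph (V ⊕ V ⊕ V) :=
  SimpleGraph.fromRel fun p q =>
    match p, q with
    | Sum.inl i, Sum.inr (Sum.inl j) => G.Adj i j ∨ i = j
    | Sum.inl i, Sum.inr (Sum.inr j) => G.Adj i j
    | _, _ => False
variable {G : SimpleGraph V}

lemma BL_adj_xy {i j : V} :
    (BL G).Adj (Sum.inl i) (Sum.inr (Sum.inl j)) ↔ (G.Adj i j ∨ i = j) := by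
  simp [BL, SimpleGraph.fromRel_adj]

lemma BL_adj_xz {i j : V} :
    (BL G).Adj (Sum.inl i) (Sum.inr (Sum.inr j)) ↔ G.Adj i j := by
  simp [BL, SimpleGraph.fromRel_adj]

lemma BL_adj_xx {i j : V} : ¬ (BL G).Adj (Sum.inl i) (Sum.inl j) := by
  simp [BL, SimpleGraph.fromRel_adj]

lemma BL_adj_rr {p q : V ⊕ V} : ¬ (BL G).Adj (Sum.inr p) (Sum.inr q) := by
  cases p <;> cases q <;> simp [BL, SimpleGraph.fromRel_adj]
set_option linter.unusedSectionVars false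
section Infra
variable {W : Type*} [Fintype W]

lemma totDomSeq_le_card (H : SimpleGraph W) {k : ℕ} {v : Fin k → W}
    (h : IsTotDomSeq H v) : k ≤ Fintype.card W := by
  simpa using Fintype.card_le_of_injective v h.1

lemma lSeq_le_card (H : SimpleGraph W) {k : ℕ} {v : Fin k → W}
    (h : IsLSeq H v) : k ≤ Fintype.card W := by
  simpa using Fintype.card_le_of_injective v h.1

lemma totDomSeq_zero (H : SimpleGraph W) : IsTotDomSeq H (Fin.elim0 : Fin 0 → W) :=
  ⟨fun i => i.elim0, fun i => i.elim0⟩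

lemma lSeq_zero (H : SimpleGraph W) : IsLSeq H (Fin.elim0 : Fin 0 → W) :=
  ⟨fun i => i.elim0, fun i => i.elim0⟩

lemma totSet_nonempty (H : SimpleGraph W) :
    {k : ℕ | ∃ v : Fin k → W, IsTotDomSeq H v}.Nonempty :=
  ⟨0, Fin.elim0, totDomSeq_zero H⟩

lemma totSet_bdd (H : SimpleGraph W) :
    BddAbove {k : ℕ | ∃ v : Fin k → W, IsTotDomSeq H v} :=
  ⟨Fintype.card W, fun _ hk => by obtain ⟨w, hw⟩ := hk; exact totDomSeq_le_card H hw⟩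

lemma lSet_nonempty (H : SimpleGraph W) :
    {k : ℕ | ∃ v : Fin k → W, IsLSeq H v}.Nonempty :=
  ⟨0, Fin.elim0, lSeq_zero H⟩

lemma lSet_bdd (H : SimpleGraph W) :
    BddAbove {k : ℕ | ∃ v : Fin k → W, IsLSeq H v} :=
  ⟨Fintype.card W, fun _ hk => by obtain ⟨w, hw⟩ := hk; exact lSeq_le_card H hw⟩

lemma le_grundyTot (H : SimpleGraph W) {k : ℕ} {v : Fin k → W}
    (h : IsTotDomSeq H v) : k ≤ grundyTot H :=
  le_csSup (totSet_bdd H) ⟨v, h⟩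

lemma le_grundyL (H : SimpleGraph W) {k : ℕ} {v : Fin k → W}
    (h : IsLSeq H v) : k ≤ grundyL H :=
  le_csSup (lSet_bdd H) ⟨v, h⟩

lemma grundyTot_spec (H : SimpleGraph W) :
    ∃ v : Fin (grundyTot H) → W, IsTotDomSeq H v :=
  Nat.sSup_mem (totSet_nonempty H) (totSet_bdd H)

lemma grundyL_spec (H : SimpleGraph W) :
    ∃ v : Fin (grundyL H) → W, IsLSeq H v :=
  Nat.sSup_mem (lSet_nonempty H) (lSet_bdd H)

lemma grundyTot_le (H : SimpleGraph W) {m : ℕ}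
    (h : ∀ k (v : Fin k → W), IsTotDomSeq H v → k ≤ m) : grundyTot H ≤ m :=
  csSup_le (totSet_nonempty H) (fun _ hk => by obtain ⟨v, hv⟩ := hk; exact h _ v hv)

lemma grundyL_le_card (H : SimpleGraph W) : grundyL H ≤ Fintype.card W := by
  obtain ⟨v, hv⟩ := grundyL_spec H
  exact lSeq_le_card H hv

lemma grundyTot_le_card (H : SimpleGraph W) : grundyTot H ≤ Fintype.card W := by
  obtain ⟨v, hv⟩ := grundyTot_spec H
  exact totDomSeq_le_card H hv

lemma univ_isZFS (H : SimpleGraph W)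
    (force : SimpleGraph W → Set W → W → W → Prop) :
    IsZFS H force (Finset.univ : Finset W) := by
  refine ⟨0, Fin.elim0, Fin.elim0, fun i => i.elim0, ?_, fun i => i.elim0⟩
  intro v
  simp

lemma zfNum_spec (H : SimpleGraph W)
    (force : SimpleGraph W → Set W → W → W → Prop) :
    ∃ B : Finset W, IsZFS H force B ∧ B.card = zfNum H force := by
  have h : zfNum H force ∈ {m : ℕ | ∃ B : Finset W, IsZFS H force B ∧ B.card = m} := by
    apply Nat.sInf_mem
    exact ⟨Fintype.card W, Finset.univ, univ_isZFS H force, Finset.card_univ⟩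
  exact h

lemma zfNum_le (H : SimpleGraph W)
    (force : SimpleGraph W → Set W → W → W → Prop) {B : Finset W}
    (h : IsZFS H force B) : zfNum H force ≤ B.card :=
  Nat.sInf_le ⟨B, h, rfl⟩

end Infra
section Dual
variable {W : Type*} [Fintype W]

/-- From a total dominating sequence, a Z⁻ ZFS of complementary size. -/
lemma zfs_of_totDomSeq (H : SimpleGraph W) {k : ℕ} {v : Fin k → W}
    (h : IsTotDomSeq H v) :
    ∃ B : Finset W, IsZFS H ZminusForce B ∧ B.card = Fintype.card W - k := by
  classical
  obtain ⟨hinj, hfoot⟩ := h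
  choose u hu1 hu2 using hfoot
  have huinj : Function.Injective u := by
    intro i j hij
    by_contra hne
    rcases Ne.lt_or_gt hne with hlt | hlt
    · exact hu2 j i hlt (hij ▸ hu1 i)
    · exact hu2 i j hlt (hij ▸ hu1 j)
  refine ⟨Finset.univ \ Finset.image u Finset.univ, ⟨k, u, v, huinj, ?_, ?_⟩, ?_⟩
  · intro w
    simp [Finset.mem_sdiff, Finset.mem_image]
  · intro i
    refine ⟨?_, hu1 i, ?_⟩
    · intro hS
      exact hS i le_rfl rfl
    · intro x hadj hne j hij hx
      subst hx
      rcases eq_or_lt_of_le hij with h' | h'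
      · exact hne (by rw [h'])
      · exact hu2 j i h' hadj
  · rw [Finset.card_sdiff_of_subset (Finset.subset_univ _), Finset.card_univ,
      Finset.card_image_of_injective _ huinj, Finset.card_univ, Fintype.card_fin]

/-- From a Z⁻ ZFS, a total dominating sequence of complementary size. -/
lemma totDomSeq_of_zfs (H : SimpleGraph W) {B : Finset W}
    (h : IsZFS H ZminusForce B) :
    ∃ (k : ℕ) (v : Fin k → W), IsTotDomSeq H v ∧ k = Fintype.card W - B.card := by
  classical
  obtain ⟨k, b, a, hbinj, hcompl, hforce⟩ := h
  have himg : Finset.image b Finset.univ = Finset.univ \ B := by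
    ext w
    simp only [Finset.mem_image, Finset.mem_sdiff, Finset.mem_univ, true_and]
    exact (hcompl w).symm
  have hk : k = Fintype.card W - B.card := by
    have := congrArg Finset.card himg
    rwa [Finset.card_image_of_injective _ hbinj, Finset.card_univ, Fintype.card_fin,
      Finset.card_sdiff_of_subset (Finset.subset_univ _), Finset.card_univ] at this
  refine ⟨k, a, ⟨?_, ?_⟩, hk⟩
  · intro i j hij
    by_contra hne
    have key : ∀ i j : Fin k, i < j → a i = a j → False := by
      intro i j hlt heq
      have h1 : b j ∈ {v | ∀ l : Fin k, i ≤ l → v ≠ b l} := by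
        refine (hforce i).2.2 (b j) ?_ ?_
        · rw [heq]; exact (hforce j).2.1
        · exact fun hbij => (Fin.ne_of_lt hlt) (hbinj hbij).symm
      exact h1 j (le_of_lt hlt) rfl
    rcases Ne.lt_or_gt hne with hlt | hlt
    · exact key i j hlt hij
    · exact key j i hlt hij.symm
  · intro i
    refine ⟨b i, (hforce i).2.1, ?_⟩
    intro j hji hadj
    have h1 : b i ∈ {v | ∀ l : Fin k, j ≤ l → v ≠ b l} :=
      (hforce j).2.2 (b i) hadj (fun hbij => (Fin.ne_of_lt hji) (hbinj hbij.symm))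
    exact h1 i (le_of_lt hji) rfl
end Dual
lemma zfNum_Zminus_eq {W : Type*} [Fintype W] (H : SimpleGraph W) :
    zfNum H ZminusForce = Fintype.card W - grundyTot H := by
  apply le_antisymm
  · obtain ⟨v, hv⟩ := grundyTot_spec H
    obtain ⟨B, hB, hcard⟩ := zfs_of_totDomSeq H hv
    calc zfNum H ZminusForce ≤ B.card := zfNum_le H ZminusForce hB
    _ = Fintype.card W - grundyTot H := hcard
  · obtain ⟨B, hB, hcard⟩ := zfNum_spec H ZminusForce
    obtain ⟨k, v, hv, hk⟩ := totDomSeq_of_zfs H hB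
    have h1 : k ≤ grundyTot H := le_grundyTot H hv
    have h2 : B.card ≤ Fintype.card W := Finset.card_le_univ B
    omega

/-- From an L-sequence, a Z_L ZFS of complementary size (reverse the sequence). -/
lemma zfs_of_lSeq {W : Type*} [Fintype W] (H : SimpleGraph W) {k : ℕ} {v : Fin k → W}
    (h : IsLSeq H v) :
    ∃ B : Finset W, IsZFS H ZLForce B ∧ B.card = Fintype.card W - k := by
  classical
  obtain ⟨hinj, hfoot⟩ := h
  choose u hu1 hu2 using hfoot
  refine ⟨Finset.univ \ Finset.image v Finset.univ,
    ⟨k, fun i => v i.rev, fun i => u i.rev, ?_, ?_, ?_⟩, ?_⟩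
  · exact hinj.comp Fin.rev_injective
  · intro w
    simp only [Finset.mem_sdiff, Finset.mem_univ, true_and, not_not, Finset.mem_image]
    constructor
    · rintro ⟨i, rfl⟩
      exact ⟨i.rev, by simp⟩
    · rintro ⟨i, rfl⟩
      exact ⟨i.rev, by simp⟩
  · intro i
    show ZLForce H _ (u i.rev) (v i.rev)
    set r := i.rev with hr
    have hSmem : ∀ x : W, (∀ s : Fin k, s ≤ r → x ≠ v s) →
        x ∈ {w | ∀ j : Fin k, i ≤ j → w ≠ (fun i => v i.rev) j} := by
      intro x hx j hij
      show x ≠ v j.rev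
      exact hx j.rev (by rw [hr]; exact Fin.rev_le_rev.mpr hij)
    have hSnot : v r ∉ {w | ∀ j : Fin k, i ≤ j → w ≠ (fun i => v i.rev) j} := by
      intro hmem
      exact hmem i le_rfl (by rw [hr])
    by_cases hcase : u r = v r
    · refine Or.inr ⟨hcase, hSnot, Or.inl hcase.symm, ?_⟩
      intro x hcn hne
      refine hSmem x ?_
      intro s hs hxs
      subst hxs
      rcases eq_or_lt_of_le hs with h' | h'
      · exact hne (hcase ▸ congrArg v h')
      · rcases hcn with h'' | h''
        · exact hne (h''.trans hcase)
        · exact hu2 r s h' (hcase ▸ h''.symm)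
    · have hadj : H.Adj (v r) (u r) := by
        rcases hu1 r with h' | h'
        · exact absurd h' hcase
        · exact h'
      refine Or.inl ⟨fun he => hcase he, hSnot, hadj.symm, ?_⟩
      intro x hadjx hne
      refine hSmem x ?_
      intro s hs hxs
      subst hxs
      rcases eq_or_lt_of_le hs with h' | h'
      · exact hne (congrArg v h')
      · exact hu2 r s h' hadjx.symm
  · rw [Finset.card_sdiff_of_subset (Finset.subset_univ _), Finset.card_univ,
      Finset.card_image_of_injective _ hinj, Finset.card_univ, Fintype.card_fin]

/-- From a Z_L ZFS, an L-sequence of complementary size (reverse the forcing order). -/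
lemma lSeq_of_zfs {W : Type*} [Fintype W] (H : SimpleGraph W) {B : Finset W}
    (h : IsZFS H ZLForce B) :
    ∃ (k : ℕ) (v : Fin k → W), IsLSeq H v ∧ k = Fintype.card W - B.card := by
  classical
  obtain ⟨k, b, a, hbinj, hcompl, hforce⟩ := h
  have himg : Finset.image b Finset.univ = Finset.univ \ B := by
    ext w
    simp only [Finset.mem_image, Finset.mem_sdiff, Finset.mem_univ, true_and]
    exact (hcompl w).symm
  have hk : k = Fintype.card W - B.card := by
    have := congrArg Finset.card himg
    rwa [Finset.card_image_of_injective _ hbinj, Finset.card_univ, Fintype.card_fin,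
      Finset.card_sdiff_of_subset (Finset.subset_univ _), Finset.card_univ] at this
  refine ⟨k, fun t => b t.rev, ⟨hbinj.comp Fin.rev_injective, ?_⟩, hk⟩
  intro t
  show ∃ u, ClosedNbr H (b t.rev) u ∧ _
  set r := t.rev with hr
  refine ⟨a r, ?_, ?_⟩
  · rcases hforce r with ⟨hne, _, hadj, _⟩ | ⟨heq, _⟩
    · exact Or.inr hadj.symm
    · exact Or.inl heq
  · intro t' ht' hadj
    show False
    have hadj' : H.Adj (b t'.rev) (a r) := hadj
    set s := t'.rev with hs
    have hsr : r < s := by rw [hr, hs]; exact Fin.rev_lt_rev.mpr ht'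
    have hbs : b s ∈ {w | ∀ j : Fin k, r ≤ j → w ≠ b j} := by
      rcases hforce r with ⟨-, -, -, h3⟩ | ⟨heq, -, -, h3⟩
      · exact h3 (b s) hadj'.symm (fun he => (Fin.ne_of_lt hsr) (hbinj he).symm)
      · exact h3 (b s) (Or.inr hadj'.symm) (fun he => (Fin.ne_of_lt hsr) (hbinj he).symm)
    exact hbs s (le_of_lt hsr) rfl

lemma zfNum_ZL_eq {W : Type*} [Fintype W] (H : SimpleGraph W) :
    zfNum H ZLForce = Fintype.card W - grundyL H := by
  apply le_antisymm
  · obtain ⟨v, hv⟩ := grundyL_spec H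
    obtain ⟨B, hB, hcard⟩ := zfs_of_lSeq H hv
    calc zfNum H ZLForce ≤ B.card := zfNum_le H ZLForce hB
    _ = Fintype.card W - grundyL H := hcard
  · obtain ⟨B, hB, hcard⟩ := zfNum_spec H ZLForce
    obtain ⟨k, v, hv, hk⟩ := lSeq_of_zfs H hB
    have h1 : k ≤ grundyL H := le_grundyL H hv
    have h2 : B.card ≤ Fintype.card W := Finset.card_le_univ B
    omega
section Part1
variable {G : SimpleGraph V}

lemma totDomSeq_BL_of_lSeq {k : ℕ} {v : Fin k → V} (h : IsLSeq G v) :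
    ∃ w : Fin (k + k) → V ⊕ V ⊕ V, IsTotDomSeq (BL G) w := by
  classical
  obtain ⟨hinj, hfoot⟩ := h
  choose u hu1 hu2 using hfoot
  set e : Fin k → V ⊕ V ⊕ V := fun r =>
    if u r = v r then Sum.inr (Sum.inl (v r)) else Sum.inr (Sum.inr (u r)) with he
  have e_ne_inl : ∀ r c, e r ≠ Sum.inl c := by
    intro r c
    rw [he]; dsimp only
    split <;> simp
  have e_adj : ∀ r, (BL G).Adj (Sum.inl (v r)) (e r) := by
    intro r
    rw [he]; dsimp only
    split
    · exact BL_adj_xy.mpr (Or.inr rfl)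
    · refine BL_adj_xz.mpr ?_
      rcases hu1 r with h' | h'
      · exact absurd h' (by assumption)
      · exact h'
  have e_nonadj : ∀ r s : Fin k, r < s → ¬ (BL G).Adj (Sum.inl (v r)) (e s) := by
    intro r s hrs
    rw [he]; dsimp only
    split
    · rename_i hcase
      intro hadj
      rcases BL_adj_xy.mp hadj with h' | h'
      · exact hu2 s r hrs (hcase ▸ h')
      · exact (Fin.ne_of_lt hrs) (hinj h')
    · intro hadj
      exact hu2 s r hrs (BL_adj_xz.mp hadj)
  have einj : Function.Injective e := by
    intro r s hrs
    by_contra hne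
    have key : ∀ r s : Fin k, r < s → e r ≠ e s := by
      intro r s hlt
      rw [he]; dsimp only
      split <;> split
      · rename_i h1 h2
        intro hh
        injection hh with hh; injection hh with hh
        exact (Fin.ne_of_lt hlt) (hinj hh)
      · intro hh; injection hh with hh; exact (by simp at hh)
      · intro hh; injection hh with hh; exact (by simp at hh)
      · rename_i h1 h2
        intro hh
        injection hh with hh; injection hh with hh
        have hadj : G.Adj (v r) (u r) := by
          rcases hu1 r with h' | h'
          · exact absurd h' h1
          · exact h'
        exact hu2 s r hlt (hh ▸ hadj)
    rcases Ne.lt_or_gt hne with hlt | hlt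
    · exact key r s hlt hrs
    · exact key s r hlt hrs.symm
  refine ⟨fun i => if hi : (i : ℕ) < k then Sum.inl (v ⟨i, hi⟩)
    else e (Fin.rev ⟨(i : ℕ) - k, by omega⟩), ?_, ?_⟩
  · intro i j hij
    dsimp only at hij
    by_cases hi : (i : ℕ) < k <;> by_cases hj : (j : ℕ) < k
    · rw [dif_pos hi, dif_pos hj] at hij
      injection hij with hij
      have h1 := hinj hij
      have h2 := congrArg Fin.val h1
      exact Fin.ext h2
    · rw [dif_pos hi, dif_neg hj] at hij
      exact absurd hij.symm (e_ne_inl _ _)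
    · rw [dif_neg hi, dif_pos hj] at hij
      exact absurd hij (e_ne_inl _ _)
    · rw [dif_neg hi, dif_neg hj] at hij
      have h1 := einj hij
      have h2 := congrArg Fin.val h1
      rw [Fin.val_rev, Fin.val_rev] at h2
      simp only at h2
      have hik := i.isLt
      have hjk := j.isLt
      exact Fin.ext (by omega)
  · intro i
    by_cases hi : (i : ℕ) < k
    · refine ⟨e ⟨i, hi⟩, ?_, ?_⟩
      · dsimp only
        rw [dif_pos hi]
        exact e_adj _
      · intro j hji
        have hj : (j : ℕ) < k := by
          rw [Fin.lt_def] at hji; omega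
        dsimp only
        rw [dif_pos hj]
        exact e_nonadj ⟨j, hj⟩ ⟨i, hi⟩ (by rw [Fin.lt_def] at hji ⊢; exact hji)
    · refine ⟨Sum.inl (v (Fin.rev ⟨(i : ℕ) - k, by omega⟩)), ?_, ?_⟩
      · dsimp only
        rw [dif_neg hi]
        exact (e_adj _).symm
      · intro j hji
        by_cases hj : (j : ℕ) < k
        · dsimp only
          rw [dif_pos hj]
          exact BL_adj_xx
        · dsimp only
          rw [dif_neg hj]
          intro hadj
          refine e_nonadj (Fin.rev ⟨(i : ℕ) - k, by omega⟩)
            (Fin.rev ⟨(j : ℕ) - k, by omega⟩) ?_ hadj.symm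
          rw [Fin.lt_def, Fin.val_rev, Fin.val_rev]
          rw [Fin.lt_def] at hji
          simp only
          have hik := i.isLt
          have hjk := j.isLt
          omega

end Part1
lemma lSeq_parts (G : SimpleGraph V) {l : ℕ} {w : Fin l → V ⊕ V ⊕ V}
    (h : IsTotDomSeq (BL G) w) :
    ∃ p q, p + q = l ∧ (∃ c : Fin p → V, IsLSeq G c) ∧ (∃ d : Fin q → V, IsLSeq G d) := by
  classical
  obtain ⟨hinj, hfoot⟩ := h
  choose Wit hW1 hW2 using hfoot
  set getl : V ⊕ V ⊕ V → V := Sum.elim id (Sum.elim id id) with hgetl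
  have hleft : ∀ x : V ⊕ V ⊕ V, x.isLeft = true → x = Sum.inl (getl x) := by
    intro x hx
    cases x with
    | inl c => rfl
    | inr p => simp at hx
  have hright : ∀ x : V ⊕ V ⊕ V, ¬ (x.isLeft = true) → ∃ p, x = Sum.inr p := by
    intro x hx
    cases x with
    | inl c => simp at hx
    | inr p => exact ⟨p, rfl⟩
  have hBLnbr : ∀ (p : V ⊕ V) (y : V ⊕ V ⊕ V), (BL G).Adj (Sum.inr p) y →
      ∃ c, y = Sum.inl c := by
    intro p y hadj
    cases y with
    | inl c => exact ⟨c, rfl⟩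
    | inr q => exact absurd hadj BL_adj_rr
  set T : Finset (Fin l) := Finset.univ.filter (fun i => (w i).isLeft = true) with hT
  set Tc : Finset (Fin l) := Finset.univ.filter (fun i => ¬ ((w i).isLeft = true)) with hTc
  have hcards : T.card + Tc.card = l := by
    rw [hT, hTc, Finset.card_filter_add_card_filter_not, Finset.card_univ,
      Fintype.card_fin]
  set oT := T.orderIsoOfFin rfl with hoT
  set oS := Tc.orderIsoOfFin rfl with hoS
  refine ⟨T.card, Tc.card, hcards, ?_, ?_⟩
  -- X part
  · set c : Fin T.card → V := fun t => getl (w ((oT t : T) : Fin l)) with hc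
    have hwc : ∀ t, w ((oT t : T) : Fin l) = Sum.inl (c t) := by
      intro t
      have hmem : ((oT t : T) : Fin l) ∈ T := (oT t).2
      have hmem2 : (w ((oT t : T) : Fin l)).isLeft = true := (Finset.mem_filter.mp hmem).2
      exact hleft _ hmem2
    refine ⟨c, ?_, ?_⟩
    · intro t t' htt
      have heq : w ((oT t : T) : Fin l) = w ((oT t' : T) : Fin l) := by
        rw [hwc, hwc, htt]
      exact oT.injective (Subtype.coe_injective (hinj heq))
    · intro t
      have hadj := hW1 ((oT t : T) : Fin l)
      rw [hwc] at hadj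
      have hprev : ∀ t' : Fin T.card, t' < t →
          ¬ (BL G).Adj (Sum.inl (c t')) (Wit ((oT t : T) : Fin l)) := by
        intro t' ht' hadj'
        have hlt : ((oT t' : T) : Fin l) < ((oT t : T) : Fin l) :=
          Subtype.coe_lt_coe.mpr (oT.lt_iff_lt.mpr ht')
        exact hW2 _ _ hlt (by rw [hwc]; exact hadj')
      rcases hws : Wit ((oT t : T) : Fin l) with c' | m | m
      · rw [hws] at hadj
        exact absurd hadj BL_adj_xx
      · rw [hws] at hadj hprev
        refine ⟨m, ?_, ?_⟩
        · rcases BL_adj_xy.mp hadj with h' | h'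
          · exact Or.inr h'
          · exact Or.inl h'.symm
        · intro t' ht' hadj'
          exact hprev t' ht' (BL_adj_xy.mpr (Or.inl hadj'))
      · rw [hws] at hadj hprev
        refine ⟨m, Or.inr (BL_adj_xz.mp hadj), ?_⟩
        intro t' ht' hadj'
        exact hprev t' ht' (BL_adj_xz.mpr hadj')
  -- YZ part
  · set d : Fin Tc.card → V := fun t => getl (Wit ((oS t.rev : Tc) : Fin l)) with hd
    have hwr : ∀ t : Fin Tc.card, ∃ p, w ((oS t.rev : Tc) : Fin l) = Sum.inr p := by
      intro t
      have hmem : ((oS t.rev : Tc) : Fin l) ∈ Tc := (oS t.rev).2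
      have hmem2 : ¬ ((w ((oS t.rev : Tc) : Fin l)).isLeft = true) :=
        (Finset.mem_filter.mp hmem).2
      exact hright _ hmem2
    have hwit : ∀ t : Fin Tc.card, Wit ((oS t.rev : Tc) : Fin l) = Sum.inl (d t) := by
      intro t
      obtain ⟨p, hp⟩ := hwr t
      obtain ⟨c', hc'⟩ := hBLnbr p _ (hp ▸ hW1 ((oS t.rev : Tc) : Fin l))
      have hdt : d t = c' := by rw [hd]; dsimp only; rw [hc']; rfl
      rw [hdt, hc']
    refine ⟨d, ?_, ?_⟩
    · intro t t' htt
      by_contra hne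
      have key : ∀ s s' : Fin Tc.card, d s = d s' →
          ((oS s'.rev : Tc) : Fin l) < ((oS s.rev : Tc) : Fin l) → False := by
        intro s s' hss hlt
        have h1 := hW1 ((oS s'.rev : Tc) : Fin l)
        rw [hwit s', ← hss] at h1
        exact hW2 _ _ hlt (by rw [hwit s]; exact h1)
      have hrevne : ((oS t.rev : Tc) : Fin l) ≠ ((oS t'.rev : Tc) : Fin l) := by
        intro hcon
        exact hne (Fin.rev_injective (oS.injective (Subtype.coe_injective hcon)))
      rcases Ne.lt_or_gt hrevne with hlt | hlt
      · exact key t' t htt.symm hlt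
      · exact key t t' htt hlt
    · intro t
      obtain ⟨p, hp⟩ := hwr t
      have hadj := hW1 ((oS t.rev : Tc) : Fin l)
      rw [hp, hwit] at hadj
      rcases p with m | m
      · refine ⟨m, ?_, ?_⟩
        · rcases BL_adj_xy.mp hadj.symm with h' | h'
          · exact Or.inr h'
          · exact Or.inl h'.symm
        · intro t' ht' hadj'
          have hlt : ((oS t.rev : Tc) : Fin l) < ((oS t'.rev : Tc) : Fin l) :=
            Subtype.coe_lt_coe.mpr (oS.lt_iff_lt.mpr (Fin.rev_lt_rev.mpr ht'))
          refine hW2 _ _ hlt ?_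
          rw [hp, hwit]
          exact (BL_adj_xy.mpr (Or.inl hadj')).symm
      · refine ⟨m, Or.inr (BL_adj_xz.mp hadj.symm), ?_⟩
        intro t' ht' hadj'
        have hlt : ((oS t.rev : Tc) : Fin l) < ((oS t'.rev : Tc) : Fin l) :=
          Subtype.coe_lt_coe.mpr (oS.lt_iff_lt.mpr (Fin.rev_lt_rev.mpr ht'))
        refine hW2 _ _ hlt ?_
        rw [hp, hwit]
        exact (BL_adj_xz.mpr hadj').symm

lemma grundyTot_BL_eq {V : Type*} [Fintype V] (G : SimpleGraph V) :
    grundyTot (BL G) = 2 * grundyL G := by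
  apply le_antisymm
  · apply grundyTot_le
    intro l w hw
    obtain ⟨p, q, hpq, ⟨c, hc⟩, ⟨d, hd⟩⟩ := lSeq_parts G hw
    have h1 := le_grundyL G hc
    have h2 := le_grundyL G hd
    omega
  · obtain ⟨v, hv⟩ := grundyL_spec G
    obtain ⟨w, hw⟩ := totDomSeq_BL_of_lSeq hv
    have := le_grundyTot (BL G) hw
    omega

/-- `γ^t_gr(B_L(G)) = 2 γ^L_gr(G)` and `Z_−(B_L(G)) = n + 2 Z_L(G)`
for every finite simple graph `G` on `n` vertices. -/
theorem statement_17 {V : Type*} [Fintype V] (G : SimpleGraph V) :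
    grundyTot (BL G) = 2 * grundyL G ∧
    zfNum (BL G) ZminusForce = Fintype.card V + 2 * zfNum G ZLForce := by
  refine ⟨grundyTot_BL_eq G, ?_⟩
  rw [zfNum_Zminus_eq (BL G), zfNum_ZL_eq G, grundyTot_BL_eq G]
  have h1 : grundyL G ≤ Fintype.card V := grundyL_le_card G
  have h2 : Fintype.card (V ⊕ V ⊕ V) = Fintype.card V + (Fintype.card V + Fintype.card V) := by
    simp [Fintype.card_sum]
  omega

end ZFGrundy
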